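/- Let W be a real random variable with a continuously differentiable density f satisfying sgn(f'(t)) = −sgn(t) for t ≠ 0 and lim_{|t|→∞} t·f(t) = 0. Suppose sgn(ψ(x)) = sgn(x) for x ≠ 0. Let κ > 0 and τ > 0, and define F : [0, ∞) → ℝ by F(x) = κ − τx − 1 + E[(prox_x(ρ))'(W)], where (prox_x(ρ))'(t) = 1/(1 + x·ψ'(prox_x(ρ)(t))). Then F is strictly decreasing on [0, ∞), F(0) = κ, and lim_{x→∞} F(x) = −∞; consequently the equation F(x) = 0 has a unique solution in (0, ∞). -/

import Mathlib

noncomputable section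

open MeasureTheory Filter

lemma aux_nonneg_at_zero {g : ℝ → ℝ} (hc : ContinuousAt g 0)
    (h : ∀ x : ℝ, 0 < x → 0 ≤ g x) : 0 ≤ g 0 := by
  have ht : Tendsto g (nhdsWithin 0 (Set.Ioi 0)) (nhds (g 0)) :=
    (hc.continuousWithinAt (s := Set.Ioi 0)).tendsto
  refine ge_of_tendsto ht ?_
  filter_upwards [self_mem_nhdsWithin] with x hx
  exact h x hx

lemma aux_pos_of_sign {a : ℝ} (h : Real.sign a = 1) : 0 < a := by
  rcases lt_trichotomy a 0 with h'|h'|h'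
  · rw [Real.sign_of_neg h'] at h; norm_num at h
  · rw [h', Real.sign_zero] at h; norm_num at h
  · exact h'

lemma aux_neg_of_sign {a : ℝ} (h : Real.sign a = -1) : a < 0 := by
  rcases lt_trichotomy a 0 with h'|h'|h'
  · exact h'
  · rw [h', Real.sign_zero] at h; norm_num at h
  · rw [Real.sign_of_pos h'] at h; norm_num at h

lemma aux_deriv_nonneg {ψ ψ' : ℝ → ℝ} (hmono : Monotone ψ)
    (hd : ∀ y, HasDerivAt ψ (ψ' y) y) (y : ℝ) : 0 ≤ ψ' y := by
  have h := (hasDerivAt_iff_tendsto_slope.mp (hd y)).mono_left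
    (nhdsWithin_mono y (fun z hz => (Set.mem_compl_singleton_iff).mpr
      (ne_of_gt (Set.mem_Ioi.mp hz))))
  refine ge_of_tendsto h ?_
  filter_upwards [self_mem_nhdsWithin] with z hz
  have hz' : y < z := hz
  rw [slope_def_field]
  exact div_nonneg (sub_nonneg.mpr (hmono hz'.le)) (sub_nonneg.mpr hz'.le)

/-- `F(x) = κ - τx - 1 + E[(prox_x(ρ))'(W)]`, where `W` has density `f` and
`(prox_x(ρ))'(t) = 1/(1 + x ψ'(prox_x(ρ)(t)))`. -/
def Ffun (ρ : ℝ → ℝ) (κ τ : ℝ) (P : ℝ → ℝ → ℝ) (f : ℝ → ℝ) (x : ℝ) : ℝ :=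
  κ - τ * x - 1 + ∫ t : ℝ, (1 + x * deriv (deriv ρ) (P x t))⁻¹ * f t

theorem statement16 (ρ : ℝ → ℝ) (hρconv : ConvexOn ℝ Set.univ ρ)
    (hρsmooth : ContDiff ℝ 2 ρ)
    -- sgn(ψ(x)) = sgn(x) for x ≠ 0
    (hsgn : ∀ x : ℝ, x ≠ 0 → Real.sign (deriv ρ x) = Real.sign x)
    (κ τ : ℝ) (hκ : 0 < κ) (hτ : 0 < τ)
    -- the density f of W
    (f : ℝ → ℝ) (hf : ContDiff ℝ 1 f) (hfnonneg : ∀ t, 0 ≤ f t)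
    (hfone : ∫ t : ℝ, f t = 1)
    -- sgn(f'(t)) = -sgn(t) for t ≠ 0
    (hfsgn : ∀ t : ℝ, t ≠ 0 → Real.sign (deriv f t) = -Real.sign t)
    -- t·f(t) → 0 as |t| → ∞
    (hlim₁ : Tendsto (fun t => t * f t) atTop (nhds 0))
    (hlim₂ : Tendsto (fun t => t * f t) atBot (nhds 0))
    -- P x t = prox_x(ρ)(t) : the unique y with y + x ψ(y) = t for x > 0, and prox_0 = id
    (P : ℝ → ℝ → ℝ)
    (hP : ∀ x : ℝ, 0 < x → ∀ t, P x t + x * deriv ρ (P x t) = t)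
    (hP0 : ∀ t, P 0 t = t)
    -- prox_x(ρ) is 1-Lipschitz in t
    (hPlip : ∀ x : ℝ, 0 ≤ x → LipschitzWith 1 (P x)) :
    -- F is strictly decreasing on [0, ∞)
    StrictAntiOn (Ffun ρ κ τ P f) (Set.Ici 0) ∧
    -- F(0) = κ
    Ffun ρ κ τ P f 0 = κ ∧
    -- F(x) → -∞ as x → ∞
    Tendsto (Ffun ρ κ τ P f) atTop atBot ∧
    -- the equation F(x) = 0 has a unique solution in (0, ∞)
    (∃! x : ℝ, x ∈ Set.Ioi (0 : ℝ) ∧ Ffun ρ κ τ P f x = 0) := by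
  -- basic facts about ψ = deriv ρ and ψ' = deriv (deriv ρ)
  have hρdiff : Differentiable ℝ ρ := hρsmooth.differentiable (by norm_num)
  have hc2 : ContDiff ℝ 1 (deriv ρ) := by
    have h21 : (2 : WithTop ℕ∞) = 1 + 1 := rfl
    rw [h21] at hρsmooth
    exact (contDiff_succ_iff_deriv.mp hρsmooth).2.2
  have hψdiff : Differentiable ℝ (deriv ρ) := hc2.differentiable (by norm_num)
  have hψcont : Continuous (deriv ρ) := hψdiff.continuous
  have hψ'cont : Continuous (deriv (deriv ρ)) := hc2.continuous_deriv le_rfl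
  have hψd : ∀ y, HasDerivAt (deriv ρ) (deriv (deriv ρ) y) y :=
    fun y => (hψdiff y).hasDerivAt
  have hψmono : Monotone (deriv ρ) :=
    monotoneOn_univ.mp (hρconv.monotoneOn_deriv (fun x _ => hρdiff.differentiableAt))
  have hψ'nonneg : ∀ y, 0 ≤ deriv (deriv ρ) y := aux_deriv_nonneg hψmono hψd
  have hψ0 : deriv ρ 0 = 0 := by
    have hpos : ∀ x : ℝ, 0 < x → 0 ≤ deriv ρ x := by
      intro x hx
      have h := hsgn x hx.ne'
      rw [Real.sign_of_pos hx] at h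
      exact (aux_pos_of_sign h).le
    have hneg : ∀ x : ℝ, 0 < x → 0 ≤ -(deriv ρ (-x)) := by
      intro x hx
      have h := hsgn (-x) (by linarith)
      rw [Real.sign_of_neg (by linarith : (-x:ℝ) < 0)] at h
      exact (neg_nonneg.mpr (aux_neg_of_sign h).le)
    have h1 : 0 ≤ deriv ρ 0 := aux_nonneg_at_zero hψcont.continuousAt hpos
    have h2 : 0 ≤ -(deriv ρ (-0)) :=
      aux_nonneg_at_zero (g := fun x => -(deriv ρ (-x)))
        ((hψcont.comp continuous_neg).neg.continuousAt) hneg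
    rw [neg_zero] at h2
    linarith
  -- facts about f
  have hfdiff : Differentiable ℝ f := hf.differentiable (by norm_num)
  have hfd : ∀ t, HasDerivAt f (deriv f t) t := fun t => (hfdiff t).hasDerivAt
  have hf'cont : Continuous (deriv f) := hf.continuous_deriv le_rfl
  have hf'nonpos : ∀ t : ℝ, 0 ≤ t → deriv f t ≤ 0 := by
    intro t ht
    rcases ht.lt_or_eq with h|h
    · have hs := hfsgn t h.ne'
      rw [Real.sign_of_pos h] at hs
      exact (aux_neg_of_sign hs).le
    · have : 0 ≤ -(deriv f 0) := by
        refine aux_nonneg_at_zero (g := fun s => -(deriv f s)) hf'cont.neg.continuousAt ?_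
        intro x hx
        have hs := hfsgn x hx.ne'
        rw [Real.sign_of_pos hx] at hs
        exact neg_nonneg.mpr (aux_neg_of_sign hs).le
      rw [← h]; linarith
  have hf'nonneg : ∀ t : ℝ, t ≤ 0 → 0 ≤ deriv f t := by
    intro t ht
    rcases ht.lt_or_eq with h|h
    · have hs := hfsgn t h.ne
      rw [Real.sign_of_neg h] at hs
      have : Real.sign (deriv f t) = 1 := by rw [hs]; ring
      exact (aux_pos_of_sign this).le
    · have : 0 ≤ deriv f (-0) := by
        refine aux_nonneg_at_zero (g := fun s => deriv f (-s))
          ((hf'cont.comp continuous_neg).continuousAt) ?_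
        intro x hx
        have hs := hfsgn (-x) (by linarith)
        rw [Real.sign_of_neg (by linarith : (-x:ℝ) < 0)] at hs
        have : Real.sign (deriv f (-x)) = 1 := by rw [hs]; simp
        exact (aux_pos_of_sign this).le
      rw [h]; rw [neg_zero] at this; exact this
  -- equation for all x ≥ 0
  have heq : ∀ x : ℝ, 0 ≤ x → ∀ t, P x t + x * deriv ρ (P x t) = t := by
    intro x hx t
    rcases hx.lt_or_eq with h|h
    · exact hP x h t
    · rw [← h]; simp [hP0]
  -- sign of P
  have hPnonneg : ∀ x : ℝ, 0 ≤ x → ∀ t : ℝ, 0 ≤ t → 0 ≤ P x t := by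
    intro x hx t ht
    by_contra hc
    push_neg at hc
    have h1 : deriv ρ (P x t) ≤ 0 := hψ0 ▸ hψmono hc.le
    have h2 := heq x hx t
    nlinarith [mul_nonpos_of_nonneg_of_nonpos hx h1]
  have hPnonpos : ∀ x : ℝ, 0 ≤ x → ∀ t : ℝ, t ≤ 0 → P x t ≤ 0 := by
    intro x hx t ht
    by_contra hc
    push_neg at hc
    have h1 : 0 ≤ deriv ρ (P x t) := hψ0 ▸ hψmono hc.le
    have h2 := heq x hx t
    nlinarith [mul_nonneg hx h1]
  have hP00 : ∀ x : ℝ, 0 ≤ x → P x 0 = 0 :=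
    fun x hx => le_antisymm (hPnonpos x hx 0 le_rfl) (hPnonneg x hx 0 le_rfl)
  -- monotonicity in x
  have hPanti : ∀ x y : ℝ, 0 ≤ x → x ≤ y → ∀ t : ℝ, 0 ≤ t → P y t ≤ P x t := by
    intro x y hx hxy t ht
    by_contra hc
    push_neg at hc
    have hy : 0 ≤ y := hx.trans hxy
    have e1 := heq x hx t
    have e2 := heq y hy t
    have h0 : 0 ≤ P x t := hPnonneg x hx t ht
    have hψx : 0 ≤ deriv ρ (P x t) := hψ0 ▸ hψmono h0
    have hψxy : deriv ρ (P x t) ≤ deriv ρ (P y t) := hψmono hc.le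
    have : x * deriv ρ (P x t) ≤ y * deriv ρ (P y t) := mul_le_mul hxy hψxy hψx hy
    linarith
  have hPmono : ∀ x y : ℝ, 0 ≤ x → x ≤ y → ∀ t : ℝ, t ≤ 0 → P x t ≤ P y t := by
    intro x y hx hxy t ht
    by_contra hc
    push_neg at hc
    have hy : 0 ≤ y := hx.trans hxy
    have e1 := heq x hx t
    have e2 := heq y hy t
    have h0 : P y t ≤ 0 := hPnonpos y hy t ht
    have hψy : deriv ρ (P y t) ≤ 0 := hψ0 ▸ hψmono h0
    have hψxy : deriv ρ (P y t) ≤ deriv ρ (P x t) := hψmono hc.le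
    nlinarith
  -- P x t ≤ t for t ≥ 0, and t ≤ P x t for t ≤ 0
  have hPle : ∀ x : ℝ, 0 ≤ x → ∀ t : ℝ, 0 ≤ t → P x t ≤ t := by
    intro x hx t ht
    have e := heq x hx t
    have h1 : 0 ≤ deriv ρ (P x t) := hψ0 ▸ hψmono (hPnonneg x hx t ht)
    nlinarith [mul_nonneg hx h1]
  have hPge : ∀ x : ℝ, 0 ≤ x → ∀ t : ℝ, t ≤ 0 → t ≤ P x t := by
    intro x hx t ht
    have e := heq x hx t
    have h1 : deriv ρ (P x t) ≤ 0 := hψ0 ▸ hψmono (hPnonpos x hx t ht)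
    nlinarith [mul_nonpos_of_nonneg_of_nonpos hx h1]
  -- Lipschitz estimate in x
  have hPlipx : ∀ t x y : ℝ, 0 ≤ x → x ≤ y → |P x t - P y t| ≤ (y - x) * |deriv ρ t| := by
    intro t x y hx hxy
    have hy : 0 ≤ y := hx.trans hxy
    have e1 := heq x hx t
    have e2 := heq y hy t
    rcases le_total 0 t with ht|ht
    · have h1 : P y t ≤ P x t := hPanti x y hx hxy t ht
      rw [abs_of_nonneg (sub_nonneg.mpr h1), abs_of_nonneg (hψ0 ▸ hψmono ht)]
      have h2 : deriv ρ (P y t) ≤ deriv ρ (P x t) := hψmono h1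
      have h3 : deriv ρ (P x t) ≤ deriv ρ t := hψmono (hPle x hx t ht)
      have h4 : 0 ≤ deriv ρ (P y t) := hψ0 ▸ hψmono (hPnonneg y hy t ht)
      nlinarith
    · have h1 : P x t ≤ P y t := hPmono x y hx hxy t ht
      rw [abs_of_nonpos (sub_nonpos.mpr h1), abs_of_nonpos (hψ0 ▸ hψmono ht)]
      have h2 : deriv ρ (P x t) ≤ deriv ρ (P y t) := hψmono h1
      have h3 : deriv ρ t ≤ deriv ρ (P y t) := hψmono (hPge y hy t ht)
      have h4 : deriv ρ (P x t) ≤ 0 := hψ0 ▸ hψmono (hPnonpos x hx t ht)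
      nlinarith
  -- continuity of x ↦ P x t on [0,∞)
  have hPcontx : ∀ t : ℝ, ContinuousOn (fun x => P x t) (Set.Ici 0) := by
    intro t
    refine LipschitzOnWith.continuousOn (K := Real.toNNReal |deriv ρ t|) ?_
    refine LipschitzOnWith.of_dist_le_mul ?_
    intro x hx y hy
    rw [Real.dist_eq, Real.dist_eq, Real.coe_toNNReal _ (abs_nonneg _)]
    rcases le_total x y with h|h
    · have := hPlipx t x y hx h
      rw [abs_of_nonpos (by linarith : x - y ≤ 0)]
      calc |P x t - P y t| ≤ (y - x) * |deriv ρ t| := this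
        _ = |deriv ρ t| * -(x - y) := by ring
    · have := hPlipx t y x hy h
      rw [abs_sub_comm, abs_of_nonneg (by linarith : 0 ≤ x - y)]
      calc |P y t - P x t| ≤ (x - y) * |deriv ρ t| := this
        _ = |deriv ρ t| * (x - y) := by ring
  -- positivity of the denominator
  have hden : ∀ x : ℝ, 0 ≤ x → ∀ t : ℝ, (0:ℝ) < 1 + x * deriv (deriv ρ) (P x t) := by
    intro x hx t
    nlinarith [mul_nonneg hx (hψ'nonneg (P x t))]
  -- derivative of P x in t
  have hPd : ∀ x : ℝ, 0 ≤ x → ∀ t : ℝ,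
      HasDerivAt (P x) ((1 + x * deriv (deriv ρ) (P x t))⁻¹) t := by
    intro x hx t
    rcases hx.lt_or_eq with h|h
    · have hG : ∀ y : ℝ, HasDerivAt (fun z => z + x * deriv ρ z)
          (1 + x * deriv (deriv ρ) y) y :=
        fun y => (hasDerivAt_id y).add ((hψd y).const_mul x)
      exact HasDerivAt.of_local_left_inverse ((hPlip x hx).continuous.continuousAt)
        (hG (P x t)) (hden x hx t).ne' (Filter.Eventually.of_forall (fun y => hP x h y))
    · have hPid : P 0 = fun s => s := funext hP0
      rw [← h]
      simp only [hPid, zero_mul, add_zero, inv_one]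
      exact hasDerivAt_id' t
  -- integrability
  have hfint : Integrable f := by
    by_contra h
    rw [integral_undef h] at hfone
    norm_num at hfone
  have hhcont : ∀ x : ℝ, 0 ≤ x →
      Continuous (fun t => (1 + x * deriv (deriv ρ) (P x t))⁻¹) := by
    intro x hx
    exact (continuous_const.add (continuous_const.mul
      (hψ'cont.comp (hPlip x hx).continuous))).inv₀ (fun t => (hden x hx t).ne')
  have hinvle : ∀ x : ℝ, 0 ≤ x → ∀ t : ℝ, (1 + x * deriv (deriv ρ) (P x t))⁻¹ ≤ 1 := by
    intro x hx t
    refine inv_le_one_of_one_le₀ ?_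
    nlinarith [mul_nonneg hx (hψ'nonneg (P x t))]
  have hinvpos : ∀ x : ℝ, 0 ≤ x → ∀ t : ℝ, 0 < (1 + x * deriv (deriv ρ) (P x t))⁻¹ :=
    fun x hx t => inv_pos.mpr (hden x hx t)
  have hint : ∀ x : ℝ, 0 ≤ x →
      Integrable (fun t => (1 + x * deriv (deriv ρ) (P x t))⁻¹ * f t) := by
    intro x hx
    refine hfint.mono (((hhcont x hx).mul hf.continuous)).aestronglyMeasurable
      (Filter.Eventually.of_forall (fun t => ?_))
    rw [norm_mul]
    refine (mul_le_of_le_one_left (norm_nonneg _) ?_)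
    rw [Real.norm_eq_abs, abs_of_nonneg (hinvpos x hx t).le]
    exact hinvle x hx t
  -- bound on |P x R - P y R|
  have hDbound : ∀ x : ℝ, 0 ≤ x → ∀ R : ℝ, |P x R| ≤ |R| := by
    intro x hx R
    have h := (hPlip x hx).dist_le_mul R 0
    rw [Real.dist_eq, Real.dist_eq, hP00 x hx] at h
    simpa using h
  -- the key monotonicity of the integral term
  have hkey : ∀ x y : ℝ, 0 ≤ x → x ≤ y →
      ∫ t, (1 + y * deriv (deriv ρ) (P y t))⁻¹ * f t ≤
        ∫ t, (1 + x * deriv (deriv ρ) (P x t))⁻¹ * f t := by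
    intro x y hx hxy
    have hy : 0 ≤ y := hx.trans hxy
    have hφint : Integrable (fun t => (1 + x * deriv (deriv ρ) (P x t))⁻¹ * f t -
        (1 + y * deriv (deriv ρ) (P y t))⁻¹ * f t) := (hint x hx).sub (hint y hy)
    have hmain : 0 ≤ ∫ t, ((1 + x * deriv (deriv ρ) (P x t))⁻¹ * f t -
        (1 + y * deriv (deriv ρ) (P y t))⁻¹ * f t) := by
      have hI : Tendsto (fun R : ℝ => ∫ t in (-R)..R,
          ((1 + x * deriv (deriv ρ) (P x t))⁻¹ * f t -
            (1 + y * deriv (deriv ρ) (P y t))⁻¹ * f t)) atTop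
          (nhds (∫ t, ((1 + x * deriv (deriv ρ) (P x t))⁻¹ * f t -
            (1 + y * deriv (deriv ρ) (P y t))⁻¹ * f t))) :=
        MeasureTheory.intervalIntegral_tendsto_integral hφint
          tendsto_neg_atTop_atBot tendsto_id
      -- boundary terms
      have hterm1 : Tendsto (fun R : ℝ => f R * (P x R - P y R)) atTop (nhds 0) := by
        refine squeeze_zero_norm' (a := fun R : ℝ => 2 * (R * f R)) ?_ ?_
        · filter_upwards [eventually_ge_atTop (0:ℝ)] with R hR
          rw [norm_mul, Real.norm_eq_abs, Real.norm_eq_abs, abs_of_nonneg (hfnonneg R)]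
          have h1 : |P x R - P y R| ≤ 2 * R := by
            have := abs_sub (P x R) (P y R)
            have h2 := hDbound x hx R
            have h3 := hDbound y hy R
            rw [abs_of_nonneg hR] at h2 h3
            calc |P x R - P y R| ≤ |P x R| + |P y R| := abs_sub _ _
              _ ≤ 2 * R := by linarith
          calc f R * |P x R - P y R| ≤ f R * (2 * R) :=
                mul_le_mul_of_nonneg_left h1 (hfnonneg R)
            _ = 2 * (R * f R) := by ring
        · have : Tendsto (fun R : ℝ => 2 * (R * f R)) atTop (nhds (2 * 0)) :=
            hlim₁.const_mul 2
          simpa using this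
      have hterm2 : Tendsto (fun R : ℝ => f (-R) * (P x (-R) - P y (-R))) atTop (nhds 0) := by
        have hcomp : Tendsto (fun R : ℝ => (-R) * f (-R)) atTop (nhds 0) :=
          hlim₂.comp tendsto_neg_atTop_atBot
        refine squeeze_zero_norm' (a := fun R : ℝ => (-2) * ((-R) * f (-R))) ?_ ?_
        · filter_upwards [eventually_ge_atTop (0:ℝ)] with R hR
          rw [norm_mul, Real.norm_eq_abs, Real.norm_eq_abs, abs_of_nonneg (hfnonneg (-R))]
          have h1 : |P x (-R) - P y (-R)| ≤ 2 * R := by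
            have h2 := hDbound x hx (-R)
            have h3 := hDbound y hy (-R)
            rw [abs_neg, abs_of_nonneg hR] at h2 h3
            calc |P x (-R) - P y (-R)| ≤ |P x (-R)| + |P y (-R)| := abs_sub _ _
              _ ≤ 2 * R := by linarith
          calc f (-R) * |P x (-R) - P y (-R)| ≤ f (-R) * (2 * R) :=
                mul_le_mul_of_nonneg_left h1 (hfnonneg (-R))
            _ = (-2) * ((-R) * f (-R)) := by ring
        · have : Tendsto (fun R : ℝ => (-2) * ((-R) * f (-R))) atTop (nhds ((-2) * 0)) :=
            hcomp.const_mul (-2)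
          simpa using this
      have hBlim : Tendsto (fun R : ℝ => f R * (P x R - P y R) -
          f (-R) * (P x (-R) - P y (-R))) atTop (nhds 0) := by
        simpa using hterm1.sub hterm2
      refine le_of_tendsto_of_tendsto hBlim hI ?_
      filter_upwards [eventually_ge_atTop (0:ℝ)] with R hR
      -- integration by parts on [-R, R]
      have hDd : ∀ t : ℝ, HasDerivAt (fun s => P x s - P y s)
          ((1 + x * deriv (deriv ρ) (P x t))⁻¹ - (1 + y * deriv (deriv ρ) (P y t))⁻¹) t :=
        fun t => (hPd x hx t).sub (hPd y hy t)
      have hRR : -R ≤ R := by linarith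
      have hu'int : IntervalIntegrable (deriv f) volume (-R) R :=
        hf'cont.intervalIntegrable _ _
      have hv'int : IntervalIntegrable (fun t => (1 + x * deriv (deriv ρ) (P x t))⁻¹ -
          (1 + y * deriv (deriv ρ) (P y t))⁻¹) volume (-R) R :=
        ((hhcont x hx).sub (hhcont y hy)).intervalIntegrable _ _
      have ibp := intervalIntegral.integral_mul_deriv_eq_deriv_mul
        (u := f) (v := fun s => P x s - P y s) (u' := deriv f)
        (v' := fun t => (1 + x * deriv (deriv ρ) (P x t))⁻¹ -
          (1 + y * deriv (deriv ρ) (P y t))⁻¹)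
        (fun s _ => hfd s) (fun s _ => hDd s) hu'int hv'int
      have hcongr : (∫ t in (-R)..R, ((1 + x * deriv (deriv ρ) (P x t))⁻¹ * f t -
            (1 + y * deriv (deriv ρ) (P y t))⁻¹ * f t)) =
          ∫ s in (-R)..R, f s * ((1 + x * deriv (deriv ρ) (P x s))⁻¹ -
            (1 + y * deriv (deriv ρ) (P y s))⁻¹) := by
        refine intervalIntegral.integral_congr (fun s _ => ?_)
        ring
      have hsign : ∫ s in (-R)..R, deriv f s * (P x s - P y s) ≤ 0 := by
        have h1 : 0 ≤ ∫ s in (-R)..R, -(deriv f s * (P x s - P y s)) := by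
          refine intervalIntegral.integral_nonneg hRR (fun s hs => ?_)
          rcases le_total 0 s with h|h
          · have hD : 0 ≤ P x s - P y s := sub_nonneg.mpr (hPanti x y hx hxy s h)
            have hfs : deriv f s ≤ 0 := hf'nonpos s h
            nlinarith
          · have hD : P x s - P y s ≤ 0 := sub_nonpos.mpr (hPmono x y hx hxy s h)
            have hfs : 0 ≤ deriv f s := hf'nonneg s h
            nlinarith
        rw [intervalIntegral.integral_neg] at h1
        linarith
      beta_reduce at ibp
      rw [hcongr, ibp]
      linarith
    have hsub := integral_sub (hint x hx) (hint y hy)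
    rw [hsub] at hmain
    linarith
  -- F(0) = κ
  have hF0 : Ffun ρ κ τ P f 0 = κ := by
    unfold Ffun
    simp only [zero_mul, add_zero, inv_one, one_mul, mul_zero]
    rw [hfone]
    ring
  -- strict antitonicity
  have hFanti : StrictAntiOn (Ffun ρ κ τ P f) (Set.Ici 0) := by
    intro x hx y hy hxy
    have h1 := hkey x y hx hxy.le
    have h2 : τ * x < τ * y := mul_lt_mul_of_pos_left hxy hτ
    unfold Ffun
    linarith
  -- F(x) ≤ κ - τ x for x ≥ 0
  have hFle : ∀ x : ℝ, 0 ≤ x → Ffun ρ κ τ P f x ≤ κ - τ * x := by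
    intro x hx
    have h1 : ∫ t, (1 + x * deriv (deriv ρ) (P x t))⁻¹ * f t ≤ ∫ t, f t := by
      refine integral_mono (hint x hx) hfint (fun t => ?_)
      exact mul_le_of_le_one_left (hfnonneg t) (hinvle x hx t)
    rw [hfone] at h1
    unfold Ffun
    linarith
  -- tendsto atBot
  have hFbot : Tendsto (Ffun ρ κ τ P f) atTop atBot := by
    refine tendsto_atBot_mono' atTop (f₁ := fun x : ℝ => κ - τ * x) ?_ ?_
    · filter_upwards [eventually_ge_atTop (0:ℝ)] with x hx
      exact hFle x hx
    · have h1 : Tendsto (fun x : ℝ => τ * x) atTop atTop :=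
        Tendsto.const_mul_atTop hτ tendsto_id
      have h2 : Tendsto (fun x : ℝ => -(τ * x)) atTop atBot :=
        tendsto_neg_atTop_atBot.comp h1
      have h3 := tendsto_atBot_add_const_left atTop κ h2
      refine h3.congr (fun x => ?_)
      ring
  -- continuity of F on [0, ∞)
  have hFcont : ContinuousOn (Ffun ρ κ τ P f) (Set.Ici 0) := by
    have h1 : ContinuousOn
        (fun x : ℝ => ∫ t, (1 + x * deriv (deriv ρ) (P x t))⁻¹ * f t) (Set.Ici 0) := by
      refine continuousOn_of_dominated (bound := f) ?_ ?_ hfint ?_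
      · intro x hx
        exact (((hhcont x hx).mul hf.continuous)).aestronglyMeasurable
      · intro x hx
        refine Filter.Eventually.of_forall (fun t => ?_)
        rw [norm_mul, Real.norm_eq_abs, Real.norm_eq_abs, abs_of_nonneg (hfnonneg t),
          abs_of_nonneg (hinvpos x hx t).le]
        exact mul_le_of_le_one_left (hfnonneg t) (hinvle x hx t)
      · refine Filter.Eventually.of_forall (fun t => ?_)
        intro x hx
        have hc1 : ContinuousWithinAt (fun x => P x t) (Set.Ici 0) x := hPcontx t x hx
        have hc2 : ContinuousWithinAt
            (fun x : ℝ => 1 + x * deriv (deriv ρ) (P x t)) (Set.Ici 0) x :=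
          continuousWithinAt_const.add (continuousWithinAt_id.mul
            (hψ'cont.continuousAt.comp_continuousWithinAt hc1))
        exact (hc2.inv₀ (hden x hx t).ne').mul continuousWithinAt_const
    have h2 : Continuous (fun x : ℝ => κ - τ * x - 1) :=
      (continuous_const.sub (continuous_const.mul continuous_id)).sub continuous_const
    exact h2.continuousOn.add h1
  -- existence and uniqueness of the root
  refine ⟨hFanti, hF0, hFbot, ?_⟩
  obtain ⟨b, hbneg, hb0⟩ : ∃ b : ℝ, Ffun ρ κ τ P f b < 0 ∧ 0 < b := by
    have h1 := (hFbot.eventually (eventually_lt_atBot (0:ℝ))).and (eventually_gt_atTop (0:ℝ))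
    exact h1.exists
  have hIcc : Set.Icc (0:ℝ) b ⊆ Set.Ici 0 := fun z hz => hz.1
  have hIVT := intermediate_value_Icc' hb0.le (hFcont.mono hIcc)
  have h0mem : (0:ℝ) ∈ Set.Icc (Ffun ρ κ τ P f b) (Ffun ρ κ τ P f 0) :=
    ⟨hbneg.le, by rw [hF0]; exact hκ.le⟩
  obtain ⟨c, hc, hFc⟩ := hIVT h0mem
  have hcpos : 0 < c := by
    rcases hc.1.lt_or_eq with h|h
    · exact h
    · exfalso
      rw [← h] at hFc
      rw [hF0] at hFc
      linarith
  refine ⟨c, ⟨hcpos, hFc⟩, ?_⟩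
  rintro d ⟨hd, hFd⟩
  exact hFanti.injOn (Set.mem_Ici.mpr (le_of_lt hd)) hcpos.le (hFd.trans hFc.symm)
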